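/- Let A be a finite set and τ ∈ S(A × 2) be balanced, and let σ = id_{A×2} + τ ∈ S(2 × A × 2) (i.e., σ acts as the identity on {0} × A × 2 and as τ on {1} × A × 2). Then there exist permutations g ∈ S(A × 2) and f ∈ S(2 × A) such that σ = (id₂ × g⁻¹)(f × id₂)(id₂ × g). -/

import Mathlib

open Equiv

/-- A permutation is balanced if for every k ≥ 2 the number of k-cycles in its
cycle decomposition is even. -/
def PermBalanced {X : Type*} [Fintype X] [DecidableEq X] (σ : Equiv.Perm X) : Prop :=
  ∀ k : ℕ, 2 ≤ k → Even (σ.cycleType.count k)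

/-- A permutation is nearly balanced if for every k ≥ 3 the number of k-cycles in
its cycle decomposition is even. -/
def PermNearlyBalanced {X : Type*} [Fintype X] [DecidableEq X] (σ : Equiv.Perm X) : Prop :=
  ∀ k : ℕ, 3 ≤ k → Even (σ.cycleType.count k)

/-- The disjoint sum g + h ∈ S(2 × X): acts as g on {0(=false)} × X and as h on {1(=true)} × X. -/
def dsum {X : Type*} (g h : Equiv.Perm X) : Equiv.Perm (Bool × X) where
  toFun p := (p.1, if p.1 then h p.2 else g p.2)
  invFun p := (p.1, if p.1 then h.symm p.2 else g.symm p.2)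
  left_inv := by rintro ⟨b, x⟩; cases b <;> simp
  right_inv := by rintro ⟨b, x⟩; cases b <;> simp

/-- The factor f × id₂ acting on 2 × A × 2. -/
def leftFactor {A : Type*} (f : Equiv.Perm (Bool × A)) : Equiv.Perm (Bool × A × Bool) :=
  (Equiv.prodAssoc Bool A Bool).permCongr (Equiv.prodCongr f (Equiv.refl Bool))

/-- The factor id₂ × g acting on 2 × A × 2. -/
def rightFactor {A : Type*} (g : Equiv.Perm (A × Bool)) : Equiv.Perm (Bool × A × Bool) :=
  Equiv.prodCongr (Equiv.refl Bool) g

/-- A permutation of 2 × A × 2 is a factor if it is of the form f × id₂ or id₂ × g. -/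
def IsFactor {A : Type*} (π : Equiv.Perm (Bool × A × Bool)) : Prop :=
  (∃ f : Equiv.Perm (Bool × A), π = leftFactor f) ∨
  (∃ g : Equiv.Perm (A × Bool), π = rightFactor g)

/-- σ has alternation depth d if it is a product of d factors. -/
def AltDepth {A : Type*} (σ : Equiv.Perm (Bool × A × Bool)) (d : ℕ) : Prop :=
  ∃ L : List (Equiv.Perm (Bool × A × Bool)),
    L.length = d ∧ (∀ π ∈ L, IsFactor π) ∧ L.prod = σ

/-- A multiset of naturals all of whose counts are even is a double. -/
lemma multiset_double {s : Multiset ℕ} (h : ∀ k, Even (s.count k)) :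
    ∃ m : Multiset ℕ, m + m = s := by
  refine ⟨s.toFinset.sum fun a => Multiset.replicate (s.count a / 2) a, ?_⟩
  ext b
  rw [Multiset.count_add]
  have hc : (s.toFinset.sum fun a => Multiset.replicate (s.count a / 2) a).count b
      = if b ∈ s.toFinset then s.count b / 2 else 0 := by
    rw [Multiset.count_sum']
    simp only [Multiset.count_replicate]
    rw [Finset.sum_ite_eq' s.toFinset b fun a => s.count a / 2]
  rw [hc]
  obtain ⟨n, hn⟩ := h b
  by_cases hb : b ∈ s.toFinset
  · simp only [hb, if_true]; omega
  · have : s.count b = 0 := by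
      rw [Multiset.count_eq_zero]
      simpa using hb
    simp [hb, this]

/-- The slice {x : A × Bool // x.2 = c} is equivalent to A. -/
def sliceEquiv {A : Type*} (c : Bool) : A ≃ {x : A × Bool // x.2 = c} where
  toFun a := ⟨(a, c), rfl⟩
  invFun x := x.1.1
  left_inv a := rfl
  right_inv := by rintro ⟨⟨a, b⟩, h⟩; cases h; rfl

lemma prodCongr_eq_mul {A : Type*} [DecidableEq A] (u : Equiv.Perm A) :
    Equiv.prodCongr u (Equiv.refl Bool) =
      (u.extendDomain (sliceEquiv false)) * (u.extendDomain (sliceEquiv true)) := by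
  apply Equiv.ext
  rintro ⟨a, b⟩
  cases b
  all_goals
    simp only [Equiv.prodCongr_apply, Equiv.coe_refl, Prod.map_apply, id_eq, Perm.mul_apply]
  · rw [Equiv.Perm.extendDomain_apply_not_subtype u (sliceEquiv true) (by simp),
      Equiv.Perm.extendDomain_apply_subtype u (sliceEquiv false) rfl]
    rfl
  · rw [Equiv.Perm.extendDomain_apply_subtype u (sliceEquiv true) rfl]
    rw [show ((sliceEquiv true) (u ((sliceEquiv (A := A) true).symm ⟨(a, true), rfl⟩)) : A × Bool)
        = (u a, true) from rfl,
      Equiv.Perm.extendDomain_apply_not_subtype u (sliceEquiv false) (by simp)]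

lemma disjoint_slices {A : Type*} [DecidableEq A] (u : Equiv.Perm A) :
    Equiv.Perm.Disjoint (u.extendDomain (sliceEquiv (A := A) false))
      (u.extendDomain (sliceEquiv true)) := by
  rintro ⟨a, b⟩
  cases b
  · right
    exact Equiv.Perm.extendDomain_apply_not_subtype u (sliceEquiv true) (by simp)
  · left
    exact Equiv.Perm.extendDomain_apply_not_subtype u (sliceEquiv false) (by simp)

lemma cycleType_prodCongr {A : Type*} [Fintype A] [DecidableEq A] (u : Equiv.Perm A) :
    Equiv.Perm.cycleType (Equiv.prodCongr u (Equiv.refl Bool)) = u.cycleType + u.cycleType := by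
  rw [prodCongr_eq_mul, Equiv.Perm.Disjoint.cycleType_mul (disjoint_slices u),
    Equiv.Perm.cycleType_extendDomain, Equiv.Perm.cycleType_extendDomain]

theorem stmt_9 {A : Type*} [Fintype A] [DecidableEq A] (τ : Equiv.Perm (A × Bool))
    (hτ : PermBalanced τ) :
    ∃ (g : Equiv.Perm (A × Bool)) (f : Equiv.Perm (Bool × A)),
      dsum 1 τ = rightFactor g⁻¹ * leftFactor f * rightFactor g := by
  have hall : ∀ k, Even (τ.cycleType.count k) := by
    intro k
    rcases le_or_gt 2 k with hk | hk
    · exact hτ k hk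
    · have : k ∉ τ.cycleType := fun hmem =>
        absurd (Equiv.Perm.two_le_of_mem_cycleType hmem) (by omega)
      rw [Multiset.count_eq_zero_of_notMem this]
      exact Even.zero
  obtain ⟨m, hm⟩ := multiset_double hall
  have hm2 : ∀ a ∈ m, 2 ≤ a := fun a ha =>
    Equiv.Perm.two_le_of_mem_cycleType (hm ▸ Multiset.mem_add.2 (Or.inl ha))
  have hsum : m.sum ≤ Fintype.card A := by
    have h1 : (m + m).sum = τ.cycleType.sum := by rw [hm]
    have h2 : τ.cycleType.sum = τ.support.card := Equiv.Perm.sum_cycleType τ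
    have h3 : τ.support.card ≤ Fintype.card (A × Bool) := τ.support.card_le_univ
    have h4 : Fintype.card (A × Bool) = Fintype.card A * 2 := by
      simp [Fintype.card_prod]
    rw [Multiset.sum_add] at h1
    omega
  obtain ⟨u, hu⟩ := (Equiv.Perm.exists_with_cycleType_iff A).mpr ⟨hsum, hm2⟩
  have hconj : IsConj (Equiv.prodCongr u (Equiv.refl Bool)) τ :=
    Equiv.Perm.isConj_iff_cycleType_eq.2 (by rw [cycleType_prodCongr, hu, hm])
  obtain ⟨c, hc⟩ := isConj_iff.1 hconj
  refine ⟨c⁻¹, dsum 1 u, ?_⟩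
  have hτeq : ∀ y : A × Bool, τ y = c ((Equiv.prodCongr u (Equiv.refl Bool)) (c⁻¹ y)) := by
    intro y
    conv_lhs => rw [← hc]
    rfl
  apply Equiv.ext
  rintro ⟨b, a, d⟩
  cases b
  · simp [dsum, rightFactor, leftFactor, Perm.mul_apply]
  · simp only [dsum, rightFactor, leftFactor, Perm.mul_apply, inv_inv,
      Equiv.prodCongr_apply, Equiv.coe_refl, Prod.map_apply, id_eq, Equiv.coe_fn_mk,
      Equiv.permCongr_apply, Equiv.prodAssoc_symm_apply, Equiv.prodAssoc_apply,
      if_true, hτeq (a, d)]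
    rfl
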